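/- For every integer N ≥ 0 and every M ∈ ℤ, the sum of Z^{(M)}_{(n,m)} over all pairs (n, m) of nonnegative integers with n + m = N, m + M ≥ 0 and n − M ≥ 0 equals 0 in ℚ(t). -/

import Mathlib

open Finset

/-- The variable `t` of the field `ℚ(t)` of rational functions. -/
noncomputable def tR : RatFunc ℚ := RatFunc.X

/-- `Z^{(M)}_{(n,m)} = t^{(n−M)m}(t^{m+M} − t^{n}) /
  [∏_{s=1}^{n}(1−t^{−s}) · ∏_{s=1}^{m+M}(1−t^{−s}) · ∏_{s=1}^{m}(1−t^{s}) · ∏_{s=1}^{n−M}(1−t^{s})]`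
in `ℚ(t)` (intended for `m + M ≥ 0` and `n − M ≥ 0`). -/
noncomputable def Zres (n m : ℕ) (M : ℤ) : RatFunc ℚ :=
  tR ^ (((n : ℤ) - M) * (m : ℤ)) * (tR ^ ((m : ℤ) + M) - tR ^ (n : ℤ)) /
    ((∏ s ∈ Finset.Icc 1 n, (1 - tR ^ (-(s : ℤ)))) *
      (∏ s ∈ Finset.Icc 1 ((m : ℤ) + M).toNat, (1 - tR ^ (-(s : ℤ)))) *
      (∏ s ∈ Finset.Icc 1 m, (1 - tR ^ s)) *
      ∏ s ∈ Finset.Icc 1 ((n : ℤ) - M).toNat, (1 - tR ^ s))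

/-- Swapping `(n, m) ↦ (m + M, n − M)` negates `Zres`. -/
lemma Zres_swap (n m : ℕ) (M : ℤ) (h1 : 0 ≤ (m : ℤ) + M) (h2 : 0 ≤ (n : ℤ) - M) :
    Zres n m M + Zres ((m : ℤ) + M).toNat ((n : ℤ) - M).toNat M = 0 := by
  have hn' : ((((m : ℤ) + M).toNat : ℤ)) = (m : ℤ) + M := Int.toNat_of_nonneg h1
  have hm' : ((((n : ℤ) - M).toNat : ℤ)) = (n : ℤ) - M := Int.toNat_of_nonneg h2
  have e2 : (n : ℤ) - M + M = (n : ℤ) := by ring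
  have e2' : (m : ℤ) + M - M = (m : ℤ) := by ring
  have e1' : (m : ℤ) * ((n : ℤ) - M) = ((n : ℤ) - M) * (m : ℤ) := mul_comm _ _
  simp only [Zres, hn', hm', e2, e2', Int.toNat_natCast, e1']
  have hD : (∏ s ∈ Finset.Icc 1 (((m : ℤ) + M).toNat), (1 - tR ^ (-(s : ℤ)))) *
      (∏ s ∈ Finset.Icc 1 n, (1 - tR ^ (-(s : ℤ)))) *
      (∏ s ∈ Finset.Icc 1 (((n : ℤ) - M).toNat), (1 - tR ^ (s : ℕ))) *
      (∏ s ∈ Finset.Icc 1 m, (1 - tR ^ (s : ℕ))) =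
      (∏ s ∈ Finset.Icc 1 n, (1 - tR ^ (-(s : ℤ)))) *
      (∏ s ∈ Finset.Icc 1 (((m : ℤ) + M).toNat), (1 - tR ^ (-(s : ℤ)))) *
      (∏ s ∈ Finset.Icc 1 m, (1 - tR ^ (s : ℕ))) *
      (∏ s ∈ Finset.Icc 1 (((n : ℤ) - M).toNat), (1 - tR ^ (s : ℕ))) := by ring
  rw [hD, ← add_div]
  have : tR ^ (((n : ℤ) - M) * (m : ℤ)) * (tR ^ ((m : ℤ) + M) - tR ^ (n : ℤ)) +
      tR ^ (((n : ℤ) - M) * (m : ℤ)) * (tR ^ (n : ℤ) - tR ^ ((m : ℤ) + M)) = 0 := by ring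
  rw [this, zero_div]

/-- For every `N ≥ 0` and `M ∈ ℤ`, the sum of `Z^{(M)}_{(n,m)}` over all pairs `(n, m)` of
nonnegative integers with `n + m = N`, `m + M ≥ 0` and `n − M ≥ 0` vanishes in `ℚ(t)`. -/
theorem crystal_residue_sum_vanishes (N : ℕ) (M : ℤ) :
    ∑ p ∈ (Finset.HasAntidiagonal.antidiagonal N).filter
        (fun p => 0 ≤ (p.2 : ℤ) + M ∧ 0 ≤ (p.1 : ℤ) - M),
      Zres p.1 p.2 M = 0 := by
  refine Finset.sum_involution
    (fun p _ => ((((p.2 : ℤ) + M).toNat), (((p.1 : ℤ) - M).toNat))) ?_ ?_ ?_ ?_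
  · intro p hp
    simp only [Finset.mem_filter, Finset.HasAntidiagonal.mem_antidiagonal] at hp
    exact Zres_swap p.1 p.2 M hp.2.1 hp.2.2
  · intro p hp hf heq
    simp only [Finset.mem_filter, Finset.HasAntidiagonal.mem_antidiagonal] at hp
    apply hf
    have h1 : ((p.2 : ℤ) + M).toNat = p.1 := congrArg Prod.fst heq
    have : ((p.2 : ℤ) + M) = (p.1 : ℤ) := by omega
    rw [Zres, ← this, sub_self, mul_zero, zero_div]
  · intro p hp
    simp only [Finset.mem_filter, Finset.HasAntidiagonal.mem_antidiagonal] at hp ⊢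
    refine ⟨by omega, by omega, by omega⟩
  · intro p hp
    simp only [Finset.mem_filter, Finset.HasAntidiagonal.mem_antidiagonal] at hp
    obtain ⟨h0, h1, h2⟩ := hp
    ext <;> simp <;> omega
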